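/- Let m, n, k be natural numbers with k ≤ n. If A₁, …, A_m are drawn independently and uniformly at random from the n×k matrices over 𝔽₂ = ZMod 2, then the probability that every Aᵢ has full column rank is at least 1 − m·k·2^{k−n−1}. Equivalently, writing N for the number of full-column-rank n×k matrices over 𝔽₂, one has N^m ≥ (1 − m·k·2^{k−n−1})·2^{mnk} as real numbers. -/

import Mathlib

open Matrix Function

noncomputable def mvLin (n k : ℕ) (x : Fin k → ZMod 2) :
    Matrix (Fin n) (Fin k) (ZMod 2) →ₗ[ZMod 2] (Fin n → ZMod 2) where
  toFun A := A.mulVec x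
  map_add' A B := Matrix.add_mulVec A B x
  map_smul' c A := Matrix.smul_mulVec c A x

lemma mvLin_surj (n k : ℕ) (x : Fin k → ZMod 2) (hx : x ≠ 0) :
    Function.Surjective (mvLin n k x) := by
  obtain ⟨j, hj⟩ : ∃ j, x j ≠ 0 := by
    by_contra h
    push_neg at h
    exact hx (funext h)
  have hj1 : x j = 1 := (by decide : ∀ a : ZMod 2, a ≠ 0 → a = 1) _ hj
  intro v
  refine ⟨fun i j' => if j' = j then v i else 0, ?_⟩
  funext i
  simp [mvLin, Matrix.mulVec, dotProduct, ite_mul, hj1]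

lemma fiber_card (n k : ℕ) (x : Fin k → ZMod 2) (hx : x ≠ 0) :
    Nat.card {A : Matrix (Fin n) (Fin k) (ZMod 2) // A.mulVec x = 0} * 2 ^ n
      = 2 ^ (n * k) := by
  classical
  have hM : Nat.card (Matrix (Fin n) (Fin k) (ZMod 2)) = 2 ^ (n * k) := by
    show Nat.card (Fin n → Fin k → ZMod 2) = 2 ^ (n * k)
    simp [Nat.card_pi, Nat.card_zmod, ← pow_mul, Nat.mul_comm]
  have h1 := Submodule.card_eq_card_quotient_mul_card (LinearMap.ker (mvLin n k x))
  have h2 : Nat.card (Matrix (Fin n) (Fin k) (ZMod 2) ⧸ LinearMap.ker (mvLin n k x))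
      = 2 ^ n := by
    rw [Nat.card_congr ((mvLin n k x).quotKerEquivOfSurjective (mvLin_surj n k x hx)).toEquiv]
    simp [Nat.card_pi, Nat.card_zmod]
  have h3 : Nat.card {A : Matrix (Fin n) (Fin k) (ZMod 2) // A.mulVec x = 0}
      = Nat.card (LinearMap.ker (mvLin n k x)) := by
    apply Nat.card_congr
    exact Equiv.subtypeEquivRight (fun A => by simp [mvLin, LinearMap.mem_ker])
  rw [h3, ← h2, ← hM]; exact h1.symm

lemma exists_kervec {n k : ℕ} {A : Matrix (Fin n) (Fin k) (ZMod 2)}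
    (hA : ¬ Function.Injective A.mulVec) : ∃ x, x ≠ 0 ∧ A.mulVec x = 0 := by
  by_contra h
  push_neg at h
  apply hA
  have hinj : Function.Injective A.mulVecLin :=
    (injective_iff_map_eq_zero A.mulVecLin).mpr fun a ha => by
      by_contra hne
      exact h a hne (by simpa using ha)
  exact hinj

lemma bad_bound (n k : ℕ) :
    Nat.card {A : Matrix (Fin n) (Fin k) (ZMod 2) // ¬ Function.Injective A.mulVec} * 2 ^ n
      ≤ (2 ^ k - 1) * 2 ^ (n * k) := by
  classical
  set S := {x : Fin k → ZMod 2 // x ≠ 0}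
  have hF : Nat.card {A : Matrix (Fin n) (Fin k) (ZMod 2) // ¬ Function.Injective A.mulVec}
      ≤ Nat.card (Σ x : S, {A : Matrix (Fin n) (Fin k) (ZMod 2) // A.mulVec x.1 = 0}) := by
    have hex : ∀ A : {A : Matrix (Fin n) (Fin k) (ZMod 2) // ¬ Function.Injective A.mulVec},
        ∃ x, x ≠ 0 ∧ (A : Matrix (Fin n) (Fin k) (ZMod 2)).mulVec x = 0 :=
      fun A => exists_kervec A.2
    choose w hw1 hw2 using hex
    refine Nat.card_le_card_of_injective
      (fun A => ⟨⟨w A, hw1 A⟩, ⟨A.1, hw2 A⟩⟩) ?_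
    intro A B hAB
    have := congrArg (fun p : (Σ x : S, {A : Matrix (Fin n) (Fin k) (ZMod 2) // A.mulVec x.1 = 0}) =>
      (p.2 : Matrix (Fin n) (Fin k) (ZMod 2))) hAB
    exact Subtype.ext this
  have hsig : Nat.card (Σ x : S, {A : Matrix (Fin n) (Fin k) (ZMod 2) // A.mulVec x.1 = 0}) * 2 ^ n
      = (2 ^ k - 1) * 2 ^ (n * k) := by
    rw [Nat.card_eq_fintype_card, Fintype.card_sigma]
    rw [Finset.sum_mul]
    have : ∀ x : S, Fintype.card {A : Matrix (Fin n) (Fin k) (ZMod 2) // A.mulVec x.1 = 0} * 2 ^ n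
        = 2 ^ (n * k) := fun x => by
      rw [← Nat.card_eq_fintype_card]; exact fiber_card n k x.1 x.2
    rw [Finset.sum_congr rfl fun x _ => this x, Finset.sum_const, Finset.card_univ, smul_eq_mul]
    congr 1
    rw [Fintype.card_subtype_compl (p := fun x : Fin k → ZMod 2 => x = 0)]
    · simp [Fintype.card_subtype_eq]
  calc Nat.card {A : Matrix (Fin n) (Fin k) (ZMod 2) // ¬ Function.Injective A.mulVec} * 2 ^ n
      ≤ Nat.card (Σ x : S, {A : Matrix (Fin n) (Fin k) (ZMod 2) // A.mulVec x.1 = 0}) * 2 ^ n :=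
        Nat.mul_le_mul_right _ hF
    _ = (2 ^ k - 1) * 2 ^ (n * k) := hsig

lemma split_card (n k : ℕ) :
    Nat.card {A : Matrix (Fin n) (Fin k) (ZMod 2) // Function.Injective A.mulVec}
      + Nat.card {A : Matrix (Fin n) (Fin k) (ZMod 2) // ¬ Function.Injective A.mulVec}
      = 2 ^ (n * k) := by
  classical
  have hM : Fintype.card (Matrix (Fin n) (Fin k) (ZMod 2)) = 2 ^ (n * k) := by
    rw [← Nat.card_eq_fintype_card]
    show Nat.card (Fin n → Fin k → ZMod 2) = 2 ^ (n * k)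
    simp [Nat.card_pi, Nat.card_zmod, ← pow_mul, Nat.mul_comm]
  have h1 := Fintype.card_subtype_compl (fun A : Matrix (Fin n) (Fin k) (ZMod 2) =>
    Function.Injective A.mulVec)
  have h2 := Fintype.card_subtype_le (fun A : Matrix (Fin n) (Fin k) (ZMod 2) =>
    Function.Injective A.mulVec)
  rw [Nat.card_eq_fintype_card, Nat.card_eq_fintype_card]
  omega

lemma aux_pow (k : ℕ) : 2 ^ (k + 1) ≤ k * 2 ^ k + 2 := by
  induction k with
  | zero => norm_num
  | succ k ih =>
    have h1 : 1 ≤ 2 ^ k := Nat.one_le_two_pow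
    have e1 : 2 ^ (k + 2) = 2 * 2 ^ (k + 1) := by ring
    have e2 : 2 ^ (k + 1) = 2 * 2 ^ k := by ring
    nlinarith

lemma stage1 (n k : ℕ) :
    (1 - (k : ℝ) * (2 : ℝ) ^ ((k : ℤ) - (n : ℤ) - 1)) * 2 ^ (n * k) ≤
      (Nat.card {A : Matrix (Fin n) (Fin k) (ZMod 2) //
        Function.Injective A.mulVec} : ℝ) := by
  have h2n : (0 : ℝ) < 2 ^ n := by positivity
  set N := (Nat.card {A : Matrix (Fin n) (Fin k) (ZMod 2) //
    Function.Injective A.mulVec} : ℝ)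
  set B := (Nat.card {A : Matrix (Fin n) (Fin k) (ZMod 2) //
    ¬ Function.Injective A.mulVec} : ℝ)
  have hsplit : N + B = 2 ^ (n * k) := by
    have h := congrArg (fun t : ℕ => (t : ℝ)) (split_card n k)
    push_cast at h
    exact h
  have hbad : B * 2 ^ n ≤ ((2 : ℝ) ^ k - 1) * 2 ^ (n * k) := by
    have h1 : (1 : ℕ) ≤ 2 ^ k := Nat.one_le_two_pow
    have h := (Nat.cast_le (α := ℝ)).mpr (bad_bound n k)
    push_cast [Nat.cast_sub h1] at h
    exact h
  have haux : (2 : ℝ) ^ (k + 1) ≤ k * 2 ^ k + 2 := by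
    exact_mod_cast aux_pow k
  have hz : (2 : ℝ) ^ ((k : ℤ) - (n : ℤ) - 1) = 2 ^ k / (2 ^ n * 2) := by
    rw [zpow_sub₀ (by norm_num), zpow_sub₀ (by norm_num)]
    norm_num [zpow_natCast, div_div]
  rw [hz, ← mul_le_mul_iff_left₀ h2n]
  have hcancel : (1 - (k : ℝ) * (2 ^ k / (2 ^ n * 2))) * 2 ^ (n * k) * 2 ^ n
      = 2 ^ (n * k) * 2 ^ n - k * 2 ^ k * 2 ^ (n * k) / 2 := by
    field_simp
  rw [hcancel]
  have hk2 : ((2 : ℝ) ^ k - 1) * 2 ^ (n * k) ≤ (k * 2 ^ k / 2) * 2 ^ (n * k) := by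
    have : (2 : ℝ) ^ k - 1 ≤ k * 2 ^ k / 2 := by
      have : (2:ℝ) ^ (k+1) = 2 * 2 ^ k := by ring
      linarith
    have hp : (0:ℝ) ≤ 2 ^ (n*k) := by positivity
    nlinarith
  have hBnn : 0 ≤ B := Nat.cast_nonneg _
  nlinarith

/-- `m` independent uniformly random `n × k` matrices over `𝔽₂` all have full
column rank with probability at least `1 - m·k·2^{k-n-1}`: writing `N` for the
number of full-column-rank matrices, `N^m ≥ (1 - m·k·2^{k-n-1})·2^{mnk}` as
real numbers. -/
theorem stmt_2 (m n k : ℕ) (hk : k ≤ n) :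
    (1 - (m : ℝ) * (k : ℝ) * (2 : ℝ) ^ ((k : ℤ) - (n : ℤ) - 1)) * 2 ^ (m * n * k) ≤
      ((Nat.card {A : Matrix (Fin n) (Fin k) (ZMod 2) //
          Function.Injective A.mulVec} : ℝ)) ^ m := by
  set N := ((Nat.card {A : Matrix (Fin n) (Fin k) (ZMod 2) //
      Function.Injective A.mulVec} : ℝ)) with hNdef
  have hN : (1 - (k : ℝ) * (2 : ℝ) ^ ((k : ℤ) - (n : ℤ) - 1)) * 2 ^ (n * k) ≤ N := stage1 n k
  have hNnn : (0 : ℝ) ≤ N := Nat.cast_nonneg _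
  set ε : ℝ := (k : ℝ) * (2 : ℝ) ^ ((k : ℤ) - (n : ℤ) - 1) with hε
  have hεnn : 0 ≤ ε := by positivity
  have hgoal : (1 - (m : ℝ) * (k : ℝ) * (2 : ℝ) ^ ((k : ℤ) - (n : ℤ) - 1))
      = 1 - (m : ℝ) * ε := by rw [hε]; ring
  rw [hgoal]
  rcases le_or_gt (1 - (m : ℝ) * ε) 0 with h | h
  · calc (1 - (m : ℝ) * ε) * 2 ^ (m * n * k) ≤ 0 :=
          mul_nonpos_of_nonpos_of_nonneg h (by positivity)
      _ ≤ N ^ m := pow_nonneg hNnn m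
  · rcases Nat.eq_zero_or_pos m with hm | hm
    · subst hm; simp
    have hε1 : ε < 1 := by
      have : ε ≤ (m : ℝ) * ε := by
        have : (1 : ℝ) ≤ m := by exact_mod_cast hm
        nlinarith
      linarith
    have hbern : 1 - (m : ℝ) * ε ≤ (1 - ε) ^ m := by
      have := one_add_mul_le_pow (a := -ε) (by linarith) m
      simpa [sub_eq_add_neg, mul_comm] using this
    have hbase : (0 : ℝ) ≤ (1 - ε) * 2 ^ (n * k) := mul_nonneg (by linarith) (by positivity)
    calc (1 - (m : ℝ) * ε) * 2 ^ (m * n * k)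
        ≤ (1 - ε) ^ m * 2 ^ (m * n * k) :=
          mul_le_mul_of_nonneg_right hbern (by positivity)
      _ = ((1 - ε) * 2 ^ (n * k)) ^ m := by
          rw [mul_pow, ← pow_mul]
          congr 2
          ring
      _ ≤ N ^ m := pow_le_pow_left₀ hbase hN m
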